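/- Let I ⊆ S = k[x_1,…,x_n] be a homogeneous ideal, C a maximal cone of the Gröbner fan GF(I) with compatible term order < and reduced Gröbner basis G of I with respect to <, and let M ∈ Q^{n_C×n} be a matrix whose rows r_1,…,r_{n_C} ∈ C project to the primitive ray generators of C modulo the lineality space. For f = Σ_a c_a x^a ∈ I define μ_M(f) := (max{r_i·a : c_a ≠ 0})_{i=1,…,n_C} and the lift f̃_M := Σ_a c_a x^a t^{−Ma+μ_M(f)} ∈ S[t_1,…,t_{n_C}], and let Ĩ_M := (f̃_M : f ∈ I). Let ≪ be the term order on S[t_1,…,t_{n_C}] given by x^α t^λ ≪ x^β t^μ iff x^α < x^β, or x^α = x^β and t^λ <_lex t^μ. Then {g̃_M : g ∈ G} is a Gröbner basis of Ĩ_M with respect to ≪, i.e. the leading terms of the lifted elements g̃_M generate init_≪(Ĩ_M). -/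

import Mathlib

/- STATEMENT 16 (BMN, Prop 3.9): for a maximal Gröbner cone `C` of a homogeneous
ideal `I` with compatible term order `<` and reduced Gröbner basis `G`, and a
matrix `M` of integral representatives of the ray generators of `C` (mod
lineality), the lifts `g̃_M` of the elements `g ∈ G` form a Gröbner basis of the
lifted ideal `Ĩ_M ⊆ S[t_1,…,t_N]` with respect to the order `≪` (compare
`x`-parts by `<`, break ties lexicographically in the `t`-parts). -/

open MvPolynomial
open scoped Classical

noncomputable section

def wdot {n : ℕ} (w : Fin n → ℝ) (a : Fin n →₀ ℕ) : ℝ := ∑ i, w i * (a i : ℝ)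

def initForm {k : Type*} [Field k] {n : ℕ} (w : Fin n → ℝ) (f : MvPolynomial (Fin n) k) :
    MvPolynomial (Fin n) k :=
  ∑ b ∈ f.support.filter (fun b => ∀ a ∈ f.support, wdot w a ≤ wdot w b),
    monomial b (coeff b f)

def initIdeal {k : Type*} [Field k] {n : ℕ} (w : Fin n → ℝ)
    (I : Ideal (MvPolynomial (Fin n) k)) : Ideal (MvPolynomial (Fin n) k) :=
  Ideal.span {g | ∃ f ∈ I, f ≠ 0 ∧ g = initForm w f}

def gfCone {k : Type*} [Field k] {n : ℕ} (I : Ideal (MvPolynomial (Fin n) k))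
    (w : Fin n → ℝ) : Set (Fin n → ℝ) :=
  closure {v | initIdeal v I = initIdeal w I}

def IsTermOrder {σ : Type*} (tle : (σ →₀ ℕ) → (σ →₀ ℕ) → Prop) : Prop :=
  IsLinearOrder (σ →₀ ℕ) tle ∧ (∀ a, tle 0 a) ∧
    (∀ a b c : σ →₀ ℕ, tle a b → tle (a + c) (b + c))

def leadForm {k : Type*} [Field k] {σ : Type*} (tle : (σ →₀ ℕ) → (σ →₀ ℕ) → Prop)
    (f : MvPolynomial σ k) : MvPolynomial σ k :=
  ∑ b ∈ f.support.filter (fun b => ∀ a ∈ f.support, tle a b),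
    monomial b (coeff b f)

def leadIdeal {k : Type*} [Field k] {σ : Type*} (tle : (σ →₀ ℕ) → (σ →₀ ℕ) → Prop)
    (I : Ideal (MvPolynomial σ k)) : Ideal (MvPolynomial σ k) :=
  Ideal.span {g | ∃ f ∈ I, f ≠ 0 ∧ g = leadForm tle f}

def rdotZ {n : ℕ} (r : Fin n → ℤ) (a : Fin n →₀ ℕ) : ℤ := ∑ j, r j * (a j : ℤ)

/-- `μ_M(f)_i = max {r_i·a : c_a ≠ 0}`. -/
def muM {k : Type*} [Field k] {N n : ℕ} (M : Fin N → Fin n → ℤ)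
    (f : MvPolynomial (Fin n) k) (i : Fin N) : ℤ :=
  WithBot.unbotD 0 ((f.support.image fun a => rdotZ (M i) a).max)

/-- The exponent (in `S[t_1,…,t_N]`) of the lift of the term of `f` with exponent
`a`: the `t_i`-exponent is `μ_M(f)_i − r_i·a`. -/
def liftExp {k : Type*} [Field k] {N n : ℕ} (M : Fin N → Fin n → ℤ)
    (f : MvPolynomial (Fin n) k) (a : Fin n →₀ ℕ) : (Fin n ⊕ Fin N) →₀ ℕ :=
  Finsupp.equivFunOnFinite.symm
    (Sum.elim (fun j => a j) (fun i => (muM M f i - rdotZ (M i) a).toNat))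

/-- The lift `f̃_M = Σ_a c_a x^a t^{−M·a + μ_M(f)} ∈ S[t_1,…,t_N]`. -/
def liftPoly {k : Type*} [Field k] {N n : ℕ} (M : Fin N → Fin n → ℤ)
    (f : MvPolynomial (Fin n) k) : MvPolynomial (Fin n ⊕ Fin N) k :=
  ∑ a ∈ f.support, monomial (liftExp M f a) (coeff a f)

/-- The lifted ideal `Ĩ_M = (f̃_M : f ∈ I)`. -/
def liftIdeal {k : Type*} [Field k] {N n : ℕ} (M : Fin N → Fin n → ℤ)
    (I : Ideal (MvPolynomial (Fin n) k)) : Ideal (MvPolynomial (Fin n ⊕ Fin N) k) :=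
  Ideal.span {g | ∃ f ∈ I, g = liftPoly M f}

/-- The `x`-part of an exponent in `S[t_1,…,t_N]`. -/
def xpart {N n : ℕ} (α : (Fin n ⊕ Fin N) →₀ ℕ) : Fin n →₀ ℕ :=
  Finsupp.equivFunOnFinite.symm fun j => α (Sum.inl j)

/-- The `t`-part of an exponent in `S[t_1,…,t_N]`. -/
def tpart {N n : ℕ} (α : (Fin n ⊕ Fin N) →₀ ℕ) : Fin N → ℕ :=
  fun i => α (Sum.inr i)

/-- Strict lexicographic order on `t`-exponents. -/
def lexTLt {N : ℕ} (lam mu : Fin N → ℕ) : Prop :=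
  ∃ i : Fin N, (∀ j, j < i → lam j = mu j) ∧ lam i < mu i

/-- The term order `≪` on `S[t_1,…,t_N]`:
`x^α t^λ ≪ x^β t^μ` iff `x^α < x^β`, or `x^α = x^β` and `t^λ ≤_lex t^μ`. -/
def lleOrder {N n : ℕ} (tle : (Fin n →₀ ℕ) → (Fin n →₀ ℕ) → Prop)
    (α β : (Fin n ⊕ Fin N) →₀ ℕ) : Prop :=
  (tle (xpart α) (xpart β) ∧ xpart α ≠ xpart β) ∨
    (xpart α = xpart β ∧ (lexTLt (tpart α) (tpart β) ∨ tpart α = tpart β))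

-- basic coeff lemma
lemma coeff_sum_monomial {k σ : Type*} [CommSemiring k] (s : Finset (σ →₀ ℕ))
    (c : (σ →₀ ℕ) → k) (b : σ →₀ ℕ) :
    coeff b (∑ a ∈ s, monomial a (c a)) = if b ∈ s then c b else 0 := by
  classical
  rw [coeff_sum]
  simp_rw [coeff_monomial]
  exact Finset.sum_ite_eq' s b c

lemma exp_ext {N n : ℕ} {α β : (Fin n ⊕ Fin N) →₀ ℕ}
    (hx : xpart α = xpart β) (ht : tpart α = tpart β) : α = β := by
  ext s
  cases s with
  | inl j =>
      have := DFunLike.congr_fun hx j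
      simpa [xpart, Finsupp.coe_equivFunOnFinite_symm] using this
  | inr i => exact congrFun ht i

lemma xpart_apply {N n : ℕ} (α : (Fin n ⊕ Fin N) →₀ ℕ) (j : Fin n) :
    xpart α j = α (Sum.inl j) := by
  simp [xpart, Finsupp.coe_equivFunOnFinite_symm]

lemma xpart_add {N n : ℕ} (α β : (Fin n ⊕ Fin N) →₀ ℕ) :
    xpart (α + β) = xpart α + xpart β := by
  ext j; simp [xpart_apply]

lemma tpart_add {N n : ℕ} (α β : (Fin n ⊕ Fin N) →₀ ℕ) :
    tpart (α + β) = tpart α + tpart β := by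
  funext i; simp [tpart]

lemma rdotZ_add {n : ℕ} (r : Fin n → ℤ) (a b : Fin n →₀ ℕ) :
    rdotZ r (a + b) = rdotZ r a + rdotZ r b := by
  simp only [rdotZ, Finsupp.add_apply]
  rw [← Finset.sum_add_distrib]
  congr 1; funext j; push_cast; ring

-- lexTLt lemmas
lemma lexTLt_irrefl {N : ℕ} (a : Fin N → ℕ) : ¬ lexTLt a a := by
  rintro ⟨i, -, hlt⟩; exact lt_irrefl _ hlt

lemma lexTLt_trans {N : ℕ} {a b c : Fin N → ℕ} (h1 : lexTLt a b) (h2 : lexTLt b c) :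
    lexTLt a c := by
  obtain ⟨i, hi, hilt⟩ := h1
  obtain ⟨i', hi', hilt'⟩ := h2
  rcases lt_trichotomy i i' with h | h | h
  · exact ⟨i, fun j hj => (hi j hj).trans (hi' j (hj.trans h)), hilt.trans_le (hi' i h).le⟩
  · subst h; exact ⟨i, fun j hj => (hi j hj).trans (hi' j hj), hilt.trans hilt'⟩
  · exact ⟨i', fun j hj => (hi j (hj.trans h)).trans (hi' j hj), (hi i' h).le.trans_lt hilt'⟩

lemma lexTLt_total {N : ℕ} {a b : Fin N → ℕ} (hne : a ≠ b) : lexTLt a b ∨ lexTLt b a := by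
  classical
  have hs : (Finset.univ.filter fun i => a i ≠ b i).Nonempty := by
    by_contra hempty
    apply hne
    funext i
    by_contra hib
    exact hempty ⟨i, Finset.mem_filter.mpr ⟨Finset.mem_univ _, hib⟩⟩
  set s : Finset (Fin N) := Finset.univ.filter (fun i => a i ≠ b i) with hsdef
  set i₀ : Fin N := s.min' hs with hi₀
  have hmem : i₀ ∈ s := s.min'_mem hs
  have hne₀ : a i₀ ≠ b i₀ := by
    have := Finset.mem_filter.mp (hsdef ▸ hmem)
    exact this.2
  have heq : ∀ j, j < i₀ → a j = b j := by
    intro j hj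
    by_contra hjne
    have hjs : j ∈ s := by rw [hsdef]; exact Finset.mem_filter.mpr ⟨Finset.mem_univ _, hjne⟩
    have : i₀ ≤ j := s.min'_le j hjs
    exact absurd hj (not_lt.mpr this)
  rcases lt_or_gt_of_ne hne₀ with h | h
  · exact Or.inl ⟨i₀, heq, h⟩
  · exact Or.inr ⟨i₀, fun j hj => (heq j hj).symm, h⟩

lemma lexTLt_asymm {N : ℕ} {a b : Fin N → ℕ} (h : lexTLt a b) : ¬ lexTLt b a :=
  fun h' => lexTLt_irrefl a (lexTLt_trans h h')

section LLE
variable {n N : ℕ} {tle : (Fin n →₀ ℕ) → (Fin n →₀ ℕ) → Prop}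

lemma lle_refl (α : (Fin n ⊕ Fin N) →₀ ℕ) : lleOrder tle α α := Or.inr ⟨rfl, Or.inr rfl⟩

lemma lle_total (hlin : IsLinearOrder (Fin n →₀ ℕ) tle) (α β : (Fin n ⊕ Fin N) →₀ ℕ) : lleOrder tle α β ∨ lleOrder tle β α := by
  by_cases hx : xpart α = xpart β
  · by_cases ht : tpart α = tpart β
    · exact Or.inl (Or.inr ⟨hx, Or.inr ht⟩)
    · rcases lexTLt_total ht with h | h
      · exact Or.inl (Or.inr ⟨hx, Or.inl h⟩)
      · exact Or.inr (Or.inr ⟨hx.symm, Or.inl h⟩)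
  · haveI := hlin
    rcases total_of tle (xpart α) (xpart β) with h | h
    · exact Or.inl (Or.inl ⟨h, hx⟩)
    · exact Or.inr (Or.inl ⟨h, Ne.symm hx⟩)

lemma lle_trans (hlin : IsLinearOrder (Fin n →₀ ℕ) tle) {α β γ : (Fin n ⊕ Fin N) →₀ ℕ}
    (h1 : lleOrder tle α β) (h2 : lleOrder tle β γ) : lleOrder tle α γ := by
  haveI := hlin
  have htr : ∀ {a b c}, tle a b → tle b c → tle a c :=
    fun hab hbc => trans_of tle hab hbc
  have hanti : ∀ {a b : Fin n →₀ ℕ}, tle a b → tle b a → a = b :=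
    fun {a b} hab hba => Std.Antisymm.antisymm a b hab hba
  rcases h1 with ⟨hab, hne1⟩ | ⟨heq1, ht1⟩
  · rcases h2 with ⟨hbc, hne2⟩ | ⟨heq2, ht2⟩
    · refine Or.inl ⟨htr hab hbc, ?_⟩
      intro hac
      exact hne1 (hanti hab (hac ▸ hbc))
    · exact Or.inl ⟨heq2 ▸ hab, heq2 ▸ hne1⟩
  · rcases h2 with ⟨hbc, hne2⟩ | ⟨heq2, ht2⟩
    · exact Or.inl ⟨heq1 ▸ hbc, heq1 ▸ hne2⟩
    · refine Or.inr ⟨heq1.trans heq2, ?_⟩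
      rcases ht1 with h | h
      · rcases ht2 with h' | h'
        · exact Or.inl (lexTLt_trans h h')
        · exact Or.inl (h' ▸ h)
      · rcases ht2 with h' | h'
        · exact Or.inl (h ▸ h')
        · exact Or.inr (h.trans h')

lemma lle_antisymm (hlin : IsLinearOrder (Fin n →₀ ℕ) tle) {α β : (Fin n ⊕ Fin N) →₀ ℕ}
    (h1 : lleOrder tle α β) (h2 : lleOrder tle β α) : α = β := by
  rcases h1 with ⟨hab, hne1⟩ | ⟨heq1, ht1⟩
  · rcases h2 with ⟨hba, hne2⟩ | ⟨heq2, ht2⟩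
    · haveI := hlin
      exact absurd (Std.Antisymm.antisymm _ _ hab hba) hne1
    · exact absurd heq2.symm hne1
  · rcases h2 with ⟨hba, hne2⟩ | ⟨heq2, ht2⟩
    · exact absurd heq1 hne2.symm
    · rcases ht1 with h | h
      · rcases ht2 with h' | h'
        · exact absurd h' (lexTLt_asymm h)
        · exact exp_ext heq1 h'.symm
      · exact exp_ext heq1 h

end LLE

lemma exists_rel_max {E : Type*} (R : E → E → Prop)
    (htot : ∀ a b, R a b ∨ R b a)
    (htr : ∀ {a b c}, R a b → R b c → R a c)
    (s : Finset E) (hs : s.Nonempty) : ∃ b ∈ s, ∀ a ∈ s, R a b := by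
  classical
  induction s using Finset.induction with
  | empty => exact absurd hs (by simp)
  | @insert x s hx ih =>
      rcases s.eq_empty_or_nonempty with rfl | hs'
      · refine ⟨x, Finset.mem_insert_self _ _, ?_⟩
        intro a ha
        rw [Finset.mem_insert] at ha
        rcases ha with rfl | ha
        · rcases htot a a with h | h <;> exact h
        · exact absurd ha (Finset.notMem_empty a)
      · obtain ⟨b, hb, hbmax⟩ := ih hs'
        rcases htot x b with h | h
        · refine ⟨b, Finset.mem_insert_of_mem hb, ?_⟩
          intro a ha
          rcases Finset.mem_insert.mp ha with rfl | ha
          · exact h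
          · exact hbmax a ha
        · refine ⟨x, Finset.mem_insert_self _ _, ?_⟩
          intro a ha
          rcases Finset.mem_insert.mp ha with rfl | ha
          · rcases htot a a with h' | h' <;> exact h'
          · exact htr (hbmax a ha) h

lemma coeff_leadForm {k : Type*} [Field k] {σ : Type*}
    (tle : (σ →₀ ℕ) → (σ →₀ ℕ) → Prop) (f : MvPolynomial σ k) (b : σ →₀ ℕ) :
    coeff b (leadForm tle f) =
      if b ∈ f.support.filter (fun b' => ∀ a ∈ f.support, tle a b') then coeff b f else 0 := by
  rw [leadForm, coeff_sum_monomial]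

lemma leadForm_eq_monomial {k : Type*} [Field k] {σ : Type*}
    {tle : (σ →₀ ℕ) → (σ →₀ ℕ) → Prop}
    (hanti : ∀ {a b}, tle a b → tle b a → a = b)
    {f : MvPolynomial σ k} {b : σ →₀ ℕ} (hb : b ∈ f.support)
    (hmax : ∀ a ∈ f.support, tle a b) :
    leadForm tle f = monomial b (coeff b f) := by
  have hfilter : f.support.filter (fun b' => ∀ a ∈ f.support, tle a b') = {b} := by
    ext c
    simp only [Finset.mem_filter, Finset.mem_singleton]
    constructor
    · rintro ⟨hc, hcmax⟩
      exact hanti (hmax c hc) (hcmax b hb)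
    · rintro rfl
      exact ⟨hb, hmax⟩
  rw [leadForm, hfilter, Finset.sum_singleton]

section Lift
variable {k : Type*} [Field k] {N n : ℕ} (M : Fin N → Fin n → ℤ)

lemma xpart_liftExp (f : MvPolynomial (Fin n) k) (a : Fin n →₀ ℕ) :
    xpart (liftExp M f a) = a := by
  ext j
  rw [xpart_apply, liftExp, Finsupp.coe_equivFunOnFinite_symm]
  rfl

lemma tpart_liftExp (f : MvPolynomial (Fin n) k) (a : Fin n →₀ ℕ) (i : Fin N) :
    tpart (liftExp M f a) i = (muM M f i - rdotZ (M i) a).toNat := by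
  rw [tpart, liftExp, Finsupp.coe_equivFunOnFinite_symm]
  rfl

lemma liftExp_inj (f : MvPolynomial (Fin n) k) {a b : Fin n →₀ ℕ}
    (h : liftExp M f a = liftExp M f b) : a = b := by
  have := congrArg xpart h
  rwa [xpart_liftExp, xpart_liftExp] at this

lemma coeff_liftPoly_liftExp (f : MvPolynomial (Fin n) k) {a : Fin n →₀ ℕ}
    (ha : a ∈ f.support) :
    coeff (liftExp M f a) (liftPoly M f) = coeff a f := by
  classical
  rw [liftPoly, coeff_sum]
  simp_rw [coeff_monomial]
  rw [Finset.sum_eq_single a]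
  · simp
  · intro b hb hne
    rw [if_neg]
    intro h
    exact hne (liftExp_inj M f h)
  · intro h; exact absurd ha h

lemma coeff_liftPoly_exists (f : MvPolynomial (Fin n) k) {β : (Fin n ⊕ Fin N) →₀ ℕ}
    (h : coeff β (liftPoly M f) ≠ 0) : ∃ a ∈ f.support, β = liftExp M f a := by
  classical
  by_contra hnone
  push_neg at hnone
  apply h
  rw [liftPoly, coeff_sum]
  apply Finset.sum_eq_zero
  intro a ha
  rw [coeff_monomial, if_neg]
  intro heq
  exact hnone a ha heq.symm

lemma rdotZ_le_muM (f : MvPolynomial (Fin n) k) {a : Fin n →₀ ℕ} (ha : a ∈ f.support)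
    (i : Fin N) : rdotZ (M i) a ≤ muM M f i := by
  classical
  have hmem : rdotZ (M i) a ∈ f.support.image fun a => rdotZ (M i) a :=
    Finset.mem_image_of_mem _ ha
  have hne : (f.support.image fun a => rdotZ (M i) a).Nonempty := ⟨_, hmem⟩
  have hle := Finset.le_max' _ _ hmem
  rw [muM, ← Finset.coe_max' hne, WithBot.unbotD_coe]
  exact hle

lemma muM_eq_of_max (f : MvPolynomial (Fin n) k) {b : Fin n →₀ ℕ} (hb : b ∈ f.support)
    (i : Fin N) (hmax : ∀ a ∈ f.support, rdotZ (M i) a ≤ rdotZ (M i) b) :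
    muM M f i = rdotZ (M i) b := by
  classical
  have hmem : rdotZ (M i) b ∈ f.support.image fun a => rdotZ (M i) a :=
    Finset.mem_image_of_mem _ hb
  have hne : (f.support.image fun a => rdotZ (M i) a).Nonempty := ⟨_, hmem⟩
  rw [muM, ← Finset.coe_max' hne, WithBot.unbotD_coe]
  apply le_antisymm
  · apply Finset.max'_le
    intro y hy
    obtain ⟨a, ha, rfl⟩ := Finset.mem_image.mp hy
    exact hmax a ha
  · exact Finset.le_max' _ _ hmem

def wdeg {N n : ℕ} (M : Fin N → Fin n → ℤ) (α : (Fin n ⊕ Fin N) →₀ ℕ) : Fin N → ℤ :=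
  fun i => (tpart α i : ℤ) + rdotZ (M i) (xpart α)

lemma wdeg_add (α β : (Fin n ⊕ Fin N) →₀ ℕ) :
    wdeg M (α + β) = wdeg M α + wdeg M β := by
  funext i
  simp only [wdeg, xpart_add, tpart_add, rdotZ_add, Pi.add_apply]
  push_cast
  ring

lemma wdeg_liftExp (f : MvPolynomial (Fin n) k) {a : Fin n →₀ ℕ} (ha : a ∈ f.support) :
    wdeg M (liftExp M f a) = muM M f := by
  funext i
  rw [wdeg, tpart_liftExp, xpart_liftExp,
    Int.toNat_of_nonneg (sub_nonneg.mpr (rdotZ_le_muM M f ha i))]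
  ring

def embx {N n : ℕ} (b : Fin n →₀ ℕ) : (Fin n ⊕ Fin N) →₀ ℕ :=
  Finsupp.equivFunOnFinite.symm (Sum.elim (fun j => b j) 0)

lemma xpart_embx (b : Fin n →₀ ℕ) : xpart (embx (N := N) b) = b := by
  ext j
  rw [xpart_apply, embx, Finsupp.coe_equivFunOnFinite_symm]
  rfl

lemma embx_apply_inl (b : Fin n →₀ ℕ) (j : Fin n) : embx (N := N) b (Sum.inl j) = b j := by
  rw [embx, Finsupp.coe_equivFunOnFinite_symm]; rfl

lemma embx_apply_inr (b : Fin n →₀ ℕ) (i : Fin N) : embx (N := N) b (Sum.inr i) = 0 := by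
  rw [embx, Finsupp.coe_equivFunOnFinite_symm]; rfl

lemma liftExp_eq_embx (f : MvPolynomial (Fin n) k) {b : Fin n →₀ ℕ}
    (hmu : ∀ i, muM M f i = rdotZ (M i) b) :
    liftExp M f b = embx b := by
  rw [liftExp, embx]
  congr 1
  funext s
  cases s with
  | inl j => rfl
  | inr i => simp [hmu i]

end Lift

section Comp
variable {k : Type*} [Field k] {N n : ℕ} (M : Fin N → Fin n → ℤ)

def compdeg (μ : Fin N → ℤ) (h : MvPolynomial (Fin n ⊕ Fin N) k) :
    MvPolynomial (Fin n ⊕ Fin N) k :=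
  ∑ α ∈ h.support.filter (fun α => wdeg M α = μ), monomial α (coeff α h)

lemma coeff_compdeg (μ : Fin N → ℤ) (h : MvPolynomial (Fin n ⊕ Fin N) k)
    (β : (Fin n ⊕ Fin N) →₀ ℕ) :
    coeff β (compdeg M μ h) = if wdeg M β = μ then coeff β h else 0 := by
  classical
  rw [compdeg, coeff_sum_monomial]
  by_cases hs : β ∈ h.support
  · by_cases hw : wdeg M β = μ
    · rw [if_pos (Finset.mem_filter.mpr ⟨hs, hw⟩), if_pos hw]
    · have hnot : β ∉ h.support.filter (fun α => wdeg M α = μ) :=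
        fun hmem => hw (Finset.mem_filter.mp hmem).2
      rw [if_neg hnot, if_neg hw]
  · have h0 : coeff β h = 0 := by rwa [MvPolynomial.notMem_support_iff] at hs
    have hnot : β ∉ h.support.filter (fun α => wdeg M α = μ) :=
      fun hmem => hs (Finset.mem_filter.mp hmem).1
    rw [if_neg hnot, h0]
    split <;> rfl

lemma compdeg_zero (μ : Fin N → ℤ) : compdeg M μ (0 : MvPolynomial (Fin n ⊕ Fin N) k) = 0 := by
  ext β
  rw [coeff_compdeg]
  split <;> simp

lemma compdeg_add (μ : Fin N → ℤ) (p q : MvPolynomial (Fin n ⊕ Fin N) k) :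
    compdeg M μ (p + q) = compdeg M μ p + compdeg M μ q := by
  ext β
  rw [coeff_add, coeff_compdeg, coeff_compdeg, coeff_compdeg, coeff_add]
  split <;> simp

lemma compdeg_sum {ι : Type*} (μ : Fin N → ℤ) (s : Finset ι)
    (F : ι → MvPolynomial (Fin n ⊕ Fin N) k) :
    compdeg M μ (∑ x ∈ s, F x) = ∑ x ∈ s, compdeg M μ (F x) := by
  classical
  induction s using Finset.induction with
  | empty => simp [compdeg_zero]
  | @insert x s hx ih =>
      rw [Finset.sum_insert hx, Finset.sum_insert hx, compdeg_add, ih]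

lemma compdeg_monomial_mul (μ : Fin N → ℤ) (β : (Fin n ⊕ Fin N) →₀ ℕ) (c : k)
    (p : MvPolynomial (Fin n ⊕ Fin N) k) :
    compdeg M μ (monomial β c * p) = monomial β c * compdeg M (μ - wdeg M β) p := by
  classical
  ext γ
  rw [coeff_compdeg, coeff_monomial_mul', coeff_monomial_mul', coeff_compdeg]
  by_cases hle : β ≤ γ
  · rw [if_pos hle, if_pos hle]
    have hsplit : γ = β + (γ - β) := (add_tsub_cancel_of_le hle).symm
    have hw : wdeg M γ = wdeg M β + wdeg M (γ - β) := by
      conv_lhs => rw [hsplit]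
      rw [wdeg_add]
    by_cases hcond : wdeg M γ = μ
    · rw [if_pos hcond, if_pos (by rw [← hcond, hw]; ring)]
    · rw [if_neg hcond, if_neg (fun h => hcond (by rw [hw, h]; ring)), mul_zero]
  · rw [if_neg hle, if_neg hle]
    split <;> rfl

lemma compdeg_liftPoly (μ : Fin N → ℤ) (f : MvPolynomial (Fin n) k) :
    compdeg M μ (liftPoly M f) = if μ = muM M f then liftPoly M f else 0 := by
  classical
  have hhom : ∀ β ∈ (liftPoly M f).support, wdeg M β = muM M f := by
    intro β hβ
    obtain ⟨a, ha, rfl⟩ := coeff_liftPoly_exists M f (MvPolynomial.mem_support_iff.mp hβ)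
    exact wdeg_liftExp M f ha
  by_cases hμ : μ = muM M f
  · rw [if_pos hμ]
    rw [compdeg, Finset.filter_true_of_mem (fun β hβ => by rw [hhom β hβ, hμ])]
    exact (MvPolynomial.as_sum _).symm
  · rw [if_neg hμ]
    rw [compdeg, Finset.filter_false_of_mem (fun β hβ => by rw [hhom β hβ]; exact fun h => hμ h.symm)]
    simp

lemma compdeg_mem (I : Ideal (MvPolynomial (Fin n) k))
    {h : MvPolynomial (Fin n ⊕ Fin N) k} (hh : h ∈ liftIdeal M I) (μ : Fin N → ℤ) :
    compdeg M μ h ∈ liftIdeal M I := by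
  classical
  revert μ
  refine Submodule.span_induction ?_ ?_ ?_ ?_ hh
  · rintro p ⟨f, hf, rfl⟩ μ
    rw [compdeg_liftPoly]
    split
    · exact Ideal.subset_span ⟨f, hf, rfl⟩
    · exact Ideal.zero_mem _
  · intro μ
    rw [compdeg_zero]
    exact Ideal.zero_mem _
  · intro p q hp hq ihp ihq μ
    rw [compdeg_add]
    exact Ideal.add_mem _ (ihp μ) (ihq μ)
  · intro a p hp ihp μ
    rw [smul_eq_mul]
    have hrw : a * p = ∑ β ∈ a.support, monomial β (coeff β a) * p := by
      conv_lhs => rw [MvPolynomial.as_sum a]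
      rw [Finset.sum_mul]
    rw [hrw, compdeg_sum]
    apply Ideal.sum_mem
    intro β hβ
    rw [compdeg_monomial_mul]
    exact Ideal.mul_mem_left _ _ (ihp _)

end Comp

section Dehom
variable {k : Type*} [Field k] {N n : ℕ} (M : Fin N → Fin n → ℤ)

def dehom : MvPolynomial (Fin n ⊕ Fin N) k →ₐ[k] MvPolynomial (Fin n) k :=
  aeval (Sum.elim X (fun _ => (1 : MvPolynomial (Fin n) k)))

lemma dehom_monomial (α : (Fin n ⊕ Fin N) →₀ ℕ) (c : k) :
    dehom (N := N) (monomial α c) = monomial (xpart α) c := by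
  rw [dehom, aeval_monomial, monomial_eq]
  congr 1
  rw [Finsupp.prod_pow, Finsupp.prod_pow, Fintype.prod_sum_type]
  simp only [Sum.elim_inl, Sum.elim_inr, one_pow, Finset.prod_const_one, mul_one]
  apply Finset.prod_congr rfl
  intro j _
  rw [xpart_apply]

lemma dehom_liftPoly (f : MvPolynomial (Fin n) k) : dehom (N := N) (liftPoly M f) = f := by
  rw [liftPoly, map_sum]
  conv_rhs => rw [MvPolynomial.as_sum f]
  apply Finset.sum_congr rfl
  intro a _
  rw [dehom_monomial, xpart_liftExp]

lemma dehom_mem (I : Ideal (MvPolynomial (Fin n) k))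
    {h : MvPolynomial (Fin n ⊕ Fin N) k} (hh : h ∈ liftIdeal M I) :
    dehom (N := N) h ∈ I := by
  refine Submodule.span_induction ?_ ?_ ?_ ?_ hh
  · rintro p ⟨f, hf, rfl⟩
    rwa [dehom_liftPoly]
  · rw [map_zero]; exact Ideal.zero_mem _
  · intro p q _ _ ihp ihq
    rw [map_add]; exact Ideal.add_mem _ ihp ihq
  · intro a p _ ihp
    rw [smul_eq_mul, map_mul]
    exact Ideal.mul_mem_left _ _ ihp

lemma coeff_dehom (h : MvPolynomial (Fin n ⊕ Fin N) k) (b : Fin n →₀ ℕ) :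
    coeff b (dehom (N := N) h) =
      ∑ α ∈ h.support.filter (fun α => xpart α = b), coeff α h := by
  classical
  conv_lhs => rw [MvPolynomial.as_sum h]
  rw [map_sum, coeff_sum]
  simp_rw [dehom_monomial, coeff_monomial]
  rw [Finset.sum_filter]

end Dehom

section MonoSpan
variable {k : Type*} [Field k] {σ : Type*}

lemma mono_span_mem (Bs : Set (σ →₀ ℕ)) {b : σ →₀ ℕ} (hb : b ∈ Bs)
    (γ : σ →₀ ℕ) (c : k) (hle : b ≤ γ) :
    monomial γ c ∈ Ideal.span {q | ∃ b' ∈ Bs, q = monomial b' (1 : k)} := by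
  have heq : monomial γ c = monomial (γ - b) c * monomial b 1 := by
    rw [monomial_mul, mul_one, tsub_add_cancel_of_le hle]
  rw [heq]
  exact Ideal.mul_mem_left _ _ (Ideal.subset_span ⟨b, hb, rfl⟩)

lemma mono_span_div (Bs : Set (σ →₀ ℕ)) {p : MvPolynomial σ k}
    (hp : p ∈ Ideal.span {q | ∃ b' ∈ Bs, q = monomial b' (1 : k)})
    {γ : σ →₀ ℕ} (hγ : coeff γ p ≠ 0) : ∃ b ∈ Bs, b ≤ γ := by
  classical
  rw [Ideal.span] at hp
  obtain ⟨c, hcsupp, hsum⟩ := Submodule.mem_span_set.mp hp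
  rw [← hsum, Finsupp.sum] at hγ
  rw [coeff_sum] at hγ
  obtain ⟨m, hm, hne⟩ := Finset.exists_ne_zero_of_sum_ne_zero hγ
  obtain ⟨b, hb, rfl⟩ := hcsupp hm
  rw [smul_eq_mul, coeff_mul_monomial'] at hne
  by_cases hle : b ≤ γ
  · exact ⟨b, hb, hle⟩
  · rw [if_neg hle] at hne
    exact absurd rfl hne

end MonoSpan

section LeadLift
variable {k : Type*} [Field k] {N n : ℕ} (M : Fin N → Fin n → ℤ)
  {tle : (Fin n →₀ ℕ) → (Fin n →₀ ℕ) → Prop}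

lemma leadForm_liftPoly (hlin : IsLinearOrder (Fin n →₀ ℕ) tle)
    {f : MvPolynomial (Fin n) k} {b : Fin n →₀ ℕ} (hb : b ∈ f.support)
    (hmax : ∀ a ∈ f.support, tle a b) :
    leadForm (lleOrder tle) (liftPoly M f) = monomial (liftExp M f b) (coeff b f) := by
  classical
  have hbmem : liftExp M f b ∈ (liftPoly M f).support := by
    rw [MvPolynomial.mem_support_iff, coeff_liftPoly_liftExp M f hb]
    rwa [MvPolynomial.mem_support_iff] at hb
  have hmax' : ∀ β ∈ (liftPoly M f).support, lleOrder tle β (liftExp M f b) := by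
    intro β hβ
    obtain ⟨a, ha, rfl⟩ := coeff_liftPoly_exists M f (MvPolynomial.mem_support_iff.mp hβ)
    by_cases hab : a = b
    · subst hab; exact lle_refl _
    · exact Or.inl ⟨by rw [xpart_liftExp, xpart_liftExp]; exact hmax a ha,
        by rw [xpart_liftExp, xpart_liftExp]; exact hab⟩
  rw [leadForm_eq_monomial (fun h1 h2 => lle_antisymm hlin h1 h2) hbmem hmax',
    coeff_liftPoly_liftExp M f hb]

lemma coeff_initForm {w : Fin n → ℝ} (g : MvPolynomial (Fin n) k) (b : Fin n →₀ ℕ) :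
    coeff b (initForm w g) =
      if b ∈ g.support.filter (fun b' => ∀ a ∈ g.support, wdot w a ≤ wdot w b') then
        coeff b g else 0 := by
  rw [initForm, coeff_sum_monomial]
  split <;> rfl

lemma wdot_cast (r : Fin n → ℤ) (a : Fin n →₀ ℕ) :
    wdot (fun j => (r j : ℝ)) a = ((rdotZ r a : ℤ) : ℝ) := by
  rw [wdot, rdotZ]
  push_cast
  rfl

lemma wdot_continuous (a : Fin n →₀ ℕ) : Continuous fun v : Fin n → ℝ => wdot v a :=
  continuous_finset_sum _ fun j _ => (continuous_apply j).mul continuous_const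

end LeadLift

theorem lifted_groebner_basis
    {k : Type*} [Field k] {n N : ℕ}
    (I : Ideal (MvPolynomial (Fin n) k))
    -- `I` is homogeneous:
    (hIhom : ∀ f ∈ I, ∀ j : ℕ, MvPolynomial.homogeneousComponent j f ∈ I)
    -- a term order `<`:
    (tle : (Fin n →₀ ℕ) → (Fin n →₀ ℕ) → Prop) (hterm : IsTermOrder tle)
    -- `C = gfCone I w₀` is a maximal Gröbner cone compatible with `<`:
    (w₀ : Fin n → ℝ) (hmono : initIdeal w₀ I = leadIdeal tle I)
    -- the rows of `M` lie in `C` and, together with the lineality space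
    -- `L_I = {l : init_l(I) = I}`, generate `C` (i.e. they represent the
    -- primitive ray generators of `C` modulo `L_I`):
    (M : Fin N → Fin n → ℤ)
    (hrows : ∀ i, (fun j => (M i j : ℝ)) ∈ gfCone I w₀)
    (hCgen : gfCone I w₀ = {x : Fin n → ℝ | ∃ l : Fin n → ℝ, initIdeal l I = I ∧
      ∃ c : Fin N → ℝ, (∀ i, 0 ≤ c i) ∧ x = l + ∑ i, c i • (fun j => (M i j : ℝ))})
    -- `G` is the reduced Gröbner basis of `I` with respect to `<`:
    (G : Finset (MvPolynomial (Fin n) k))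
    (hGI : (G : Set (MvPolynomial (Fin n) k)) ⊆ I)
    (hG0 : ∀ g ∈ G, g ≠ 0)
    (hGB : leadIdeal tle I =
      Ideal.span ((fun g => leadForm tle g) '' (G : Set (MvPolynomial (Fin n) k))))
    (hred : ∀ g ∈ G, ∃ b₀, (b₀ ∈ g.support ∧ ∀ a ∈ g.support, tle a b₀) ∧
      coeff b₀ g = 1 ∧
      ∀ a ∈ g.support, a ≠ b₀ → monomial a (1 : k) ∉ leadIdeal tle I) :
    -- then the lifts of the elements of `G` form a Gröbner basis of `Ĩ_M`
    -- with respect to `≪`: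
    leadIdeal (lleOrder tle) (liftIdeal M I) =
      Ideal.span {h | ∃ g ∈ G, h = leadForm (lleOrder tle) (liftPoly M g)} := by
  classical
  have hlin : IsLinearOrder (Fin n →₀ ℕ) tle := hterm.1
  haveI := hlin
  have hanti : ∀ {a b : Fin n →₀ ℕ}, tle a b → tle b a → a = b :=
    fun {a b} h1 h2 => Std.Antisymm.antisymm a b h1 h2
  have hrefl : ∀ a : Fin n →₀ ℕ, tle a a := fun a => by
    rcases total_of tle a a with h | h <;> exact h
  choose bexp hb1 hb2 hb3 using hred
  set Bs : Set (Fin n →₀ ℕ) := {b | ∃ g, ∃ hg : g ∈ G, b = bexp g hg} with hBs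
  have leadForm_G : ∀ g (hg : g ∈ G), leadForm tle g = monomial (bexp g hg) 1 := by
    intro g hg
    rw [leadForm_eq_monomial hanti (hb1 g hg).1 (hb1 g hg).2, hb2 g hg]
  have hLI : leadIdeal tle I = Ideal.span {q | ∃ b ∈ Bs, q = monomial b (1 : k)} := by
    rw [hGB]
    congr 1
    ext p
    constructor
    · rintro ⟨g, hg, rfl⟩
      have hg' : g ∈ G := hg
      exact ⟨bexp g hg', ⟨g, hg', rfl⟩, leadForm_G g hg'⟩
    · rintro ⟨b, ⟨g, hg, rfl⟩, rfl⟩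
      exact ⟨g, hg, leadForm_G g hg⟩
  -- key fact: the tle-leading exponent of g ∈ G maximizes every row of M
  have hkey : ∀ (g) (hg : g ∈ G) (i : Fin N), ∀ a ∈ g.support,
      rdotZ (M i) a ≤ rdotZ (M i) (bexp g hg) := by
    intro g hg i a ha
    by_contra hlt
    push_neg at hlt
    have hwlt : wdot (fun j => ((M i j : ℤ) : ℝ)) (bexp g hg) <
        wdot (fun j => ((M i j : ℤ) : ℝ)) a := by
      rw [wdot_cast, wdot_cast]
      exact_mod_cast hlt
    set V : Set (Fin n → ℝ) := {v | wdot v (bexp g hg) < wdot v a} with hV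
    have hVopen : IsOpen V := isOpen_lt (wdot_continuous _) (wdot_continuous _)
    have hcl : (fun j => ((M i j : ℤ) : ℝ)) ∈
        closure {v | initIdeal v I = initIdeal w₀ I} := hrows i
    obtain ⟨v, hvV, hvU⟩ := mem_closure_iff.mp hcl V hVopen hwlt
    have hvI : initIdeal v I = leadIdeal tle I := by
      have : initIdeal v I = initIdeal w₀ I := hvU
      rw [this, hmono]
    have hg0 := hG0 g hg
    have hgsupp : g.support.Nonempty := MvPolynomial.support_nonempty.mpr hg0
    obtain ⟨a', ha's, ha'max⟩ := Finset.exists_max_image g.support (wdot v) hgsupp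
    have ha'coeff : coeff a' (initForm v g) ≠ 0 := by
      rw [coeff_initForm, if_pos (Finset.mem_filter.mpr ⟨ha's, ha'max⟩)]
      exact MvPolynomial.mem_support_iff.mp ha's
    have hinitmem : initForm v g ∈ leadIdeal tle I := by
      rw [← hvI]
      exact Ideal.subset_span ⟨g, hGI hg, hg0, rfl⟩
    rw [hLI] at hinitmem
    obtain ⟨b', hb', hble⟩ := mono_span_div Bs hinitmem ha'coeff
    have hmono' : monomial a' (1 : k) ∈ leadIdeal tle I := by
      rw [hLI]
      exact mono_span_mem Bs hb' a' 1 hble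
    have ha'ne : a' ≠ bexp g hg := by
      intro heq
      have h1 : wdot v a ≤ wdot v a' := ha'max a ha
      rw [heq] at h1
      exact absurd (lt_of_lt_of_le hvV h1) (lt_irrefl _)
    exact hb3 g hg a' ha's ha'ne hmono'
  have hmu : ∀ (g) (hg : g ∈ G) (i : Fin N), muM M g i = rdotZ (M i) (bexp g hg) :=
    fun g hg i => muM_eq_of_max M g (hb1 g hg).1 i (hkey g hg i)
  have hliftlead : ∀ (g) (hg : g ∈ G),
      leadForm (lleOrder tle) (liftPoly M g) = monomial (embx (bexp g hg)) 1 := by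
    intro g hg
    rw [leadForm_liftPoly M hlin (hb1 g hg).1 (hb1 g hg).2, hb2 g hg,
      liftExp_eq_embx M g (fun i => hmu g hg i)]
  apply le_antisymm
  · rw [leadIdeal]
    apply Ideal.span_le.mpr
    rintro p ⟨h, hhI, hh0, rfl⟩
    have hsupp : h.support.Nonempty := MvPolynomial.support_nonempty.mpr hh0
    obtain ⟨γ, hγs, hγmax⟩ := exists_rel_max (lleOrder (N := N) tle) (lle_total hlin)
      (fun {a b c} h1 h2 => lle_trans hlin h1 h2) h.support hsupp
    have hlead : leadForm (lleOrder tle) h = monomial γ (coeff γ h) :=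
      leadForm_eq_monomial (fun {a b} h1 h2 => lle_antisymm hlin h1 h2) hγs hγmax
    set h' := compdeg M (wdeg M γ) h with hh'
    have hh'I : h' ∈ liftIdeal M I := compdeg_mem M I hhI _
    have hcγ : coeff γ h' = coeff γ h := by rw [hh', coeff_compdeg, if_pos rfl]
    have hγh's : γ ∈ h'.support :=
      MvPolynomial.mem_support_iff.mpr (by rw [hcγ]; exact MvPolynomial.mem_support_iff.mp hγs)
    have hsub : ∀ α ∈ h'.support, α ∈ h.support ∧ wdeg M α = wdeg M γ := by
      intro α hα
      have hcα := MvPolynomial.mem_support_iff.mp hα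
      rw [hh', coeff_compdeg] at hcα
      by_cases hc : wdeg M α = wdeg M γ
      · rw [if_pos hc] at hcα
        exact ⟨MvPolynomial.mem_support_iff.mpr hcα, hc⟩
      · rw [if_neg hc] at hcα
        exact absurd rfl hcα
    set f := dehom (N := N) h' with hf
    have hfI : f ∈ I := dehom_mem M I hh'I
    set b := xpart γ with hbdef
    have hfilter : h'.support.filter (fun α => xpart α = b) = {γ} := by
      ext α
      simp only [Finset.mem_filter, Finset.mem_singleton]
      constructor
      · rintro ⟨hα, hxα⟩
        have hwd := (hsub α hα).2
        have htp : tpart α = tpart γ := by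
          funext i
          have h1 : (tpart α i : ℤ) + rdotZ (M i) (xpart α) =
              (tpart γ i : ℤ) + rdotZ (M i) (xpart γ) := congrFun hwd i
          rw [hxα, hbdef] at h1
          have h2 : (tpart α i : ℤ) = (tpart γ i : ℤ) := by
            exact add_right_cancel h1
          exact_mod_cast h2
        exact exp_ext (hxα.trans hbdef) htp
      · rintro rfl
        exact ⟨hγh's, rfl⟩
    have hcoefbf : coeff b f = coeff γ h := by
      rw [hf, coeff_dehom, hfilter, Finset.sum_singleton, hcγ]
    have hbf : b ∈ f.support :=
      MvPolynomial.mem_support_iff.mpr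
        (by rw [hcoefbf]; exact MvPolynomial.mem_support_iff.mp hγs)
    have hf0 : f ≠ 0 := fun h0 => by rw [h0] at hbf; simp at hbf
    have hbmaxf : ∀ a ∈ f.support, tle a b := by
      intro a haf
      have hca := MvPolynomial.mem_support_iff.mp haf
      rw [hf, coeff_dehom] at hca
      obtain ⟨α, hαmem, hne⟩ := Finset.exists_ne_zero_of_sum_ne_zero hca
      obtain ⟨hαs, hxα⟩ := Finset.mem_filter.mp hαmem
      have hαh : α ∈ h.support := (hsub α hαs).1
      rcases hγmax α hαh with ⟨ht, hne'⟩ | ⟨heq, -⟩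
      · rw [hxα] at ht
        exact ht
      · have h2 : a = b := by rw [← hxα, heq, hbdef]
        rw [h2]
        exact hrefl b
    have hlf : leadForm tle f = monomial b (coeff b f) :=
      leadForm_eq_monomial hanti hbf hbmaxf
    have hlfmem : leadForm tle f ∈ leadIdeal tle I :=
      Ideal.subset_span ⟨f, hfI, hf0, rfl⟩
    rw [hLI] at hlfmem
    have hcb : coeff b (leadForm tle f) ≠ 0 := by
      rw [hlf, coeff_monomial, if_pos rfl, hcoefbf]
      exact MvPolynomial.mem_support_iff.mp hγs
    obtain ⟨b', ⟨g, hg, rfl⟩, hble⟩ := mono_span_div Bs hlfmem hcb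
    have hdom : embx (N := N) (bexp g hg) ≤ γ := by
      rw [Finsupp.le_def]
      intro s
      cases s with
      | inl j =>
          rw [embx_apply_inl]
          have h1 : bexp g hg j ≤ b j := Finsupp.le_def.mp hble j
          rwa [hbdef, xpart_apply] at h1
      | inr i =>
          rw [embx_apply_inr]
          exact Nat.zero_le _
    rw [hlead]
    have hsplit : monomial γ (coeff γ h) =
        monomial (γ - embx (bexp g hg)) (coeff γ h) * monomial (embx (bexp g hg)) 1 := by
      rw [monomial_mul, mul_one, tsub_add_cancel_of_le hdom]
    rw [hsplit]
    apply Ideal.mul_mem_left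
    apply Ideal.subset_span
    exact ⟨g, hg, (hliftlead g hg).symm⟩
  · apply Ideal.span_le.mpr
    rintro p ⟨g, hg, rfl⟩
    have hmem : liftPoly M g ∈ liftIdeal M I :=
      Ideal.subset_span ⟨g, hGI hg, rfl⟩
    have hne : liftPoly M g ≠ 0 := by
      intro h0
      have hc := coeff_liftPoly_liftExp M g (hb1 g hg).1
      rw [h0, coeff_zero, hb2 g hg] at hc
      exact one_ne_zero hc.symm
    exact Ideal.subset_span ⟨liftPoly M g, hmem, hne, rfl⟩
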